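/- Let (M,g) be a riemannian spin manifold with spinor bundle S(M) whose inner product (-,-) satisfies (v·ε₁,ε₂) = -(ε₁,v·ε₂). If ε₁, ε₂ are Killing spinors with the same Killing constant λ (i.e. ∇_X εᵢ = λ X·εᵢ for all vector fields X), then the vector field V defined by g(V,X) = (ε₁, X·ε₂) is a Killing vector field. -/
import Mathlib


/-- On a riemannian spin manifold (axiomatised here by a commutative ring `C` of functions, a
`C`-module `VF` of vector fields with metric `g` and Levi-Civita connection `∇`, a `C`-module
`SP` of spinor fields with spin connection `∇S`, Clifford action `cl` and spinor inner product
`B` satisfying `(v·ε₁,ε₂) = -(ε₁,v·ε₂)`): if `ε₁, ε₂` are Killing spinors with the same Killing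
constant `lam`, then the vector field `V` defined by `g(V,X) = (ε₁, X·ε₂)` is a Killing vector
field. -/
theorem squaring_killing_spinors_gives_killing_vector
    (C VF SP : Type) [CommRing C] [AddCommGroup VF] [Module C VF]
    [AddCommGroup SP] [Module C SP]
    (g : VF →ₗ[C] VF →ₗ[C] C) (hgsymm : ∀ X Y, g X Y = g Y X)
    (D : VF → C → C)                 -- directional derivative of functions
    (conn : VF → VF → VF)            -- Levi-Civita connection on vector fields
    (connS : VF → SP → SP)           -- spin connection on spinors
    (cl : VF →ₗ[C] SP →ₗ[C] SP)      -- Clifford action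
    (B : SP →ₗ[C] SP →ₗ[C] C)        -- spinor inner product
    (hmetric : ∀ X Y Z, D X (g Y Z) = g (conn X Y) Z + g Y (conn X Z))
    (hBcompat : ∀ X s t, D X (B s t) = B (connS X s) t + B s (connS X t))
    (hLeibniz : ∀ X Y s, connS X (cl Y s) = cl (conn X Y) s + cl Y (connS X s))
    (hClskew : ∀ X s t, B (cl X s) t = - B s (cl X t))
    (lam : C) (ε₁ ε₂ : SP)
    (hK₁ : ∀ X, connS X ε₁ = lam • cl X ε₁)
    (hK₂ : ∀ X, connS X ε₂ = lam • cl X ε₂)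
    (V : VF) (hV : ∀ X, g V X = B ε₁ (cl X ε₂)) :
    ∀ X Y, g (conn X V) Y + g (conn Y V) X = 0 := by
  intro X Y
  -- key lemma: g (conn X V) Y = lam * (B (cl X ε₁) (cl Y ε₂) + B ε₁ (cl Y (cl X ε₂)))
  have key : ∀ X Y : VF, g (conn X V) Y
      = lam * B (cl X ε₁) (cl Y ε₂) + lam * B ε₁ (cl Y (cl X ε₂)) := by
    intro X Y
    have h1 := hmetric X V Y
    have h2 : D X (g V Y) = D X (B ε₁ (cl Y ε₂)) := by rw [hV]
    have h3 := hBcompat X ε₁ (cl Y ε₂)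
    have h4 := hLeibniz X Y ε₂
    have h5 : g V (conn X Y) = B ε₁ (cl (conn X Y) ε₂) := hV _
    rw [h2, h3, hK₁, h4, hK₂] at h1
    simp only [map_add, map_smul, LinearMap.smul_apply, smul_eq_mul] at h1
    linear_combination -h1 - h5
  have e1 := key X Y
  have e2 := key Y X
  have s1 := hClskew X ε₁ (cl Y ε₂)
  have s2 := hClskew Y ε₁ (cl X ε₂)
  rw [e1, e2, s1, s2]
  ring
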